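/- Let Γ be a preGarside trickle graph. Then the preGarside trickle monoid Tr⁺(Γ) is a preGarside monoid; consequently the trickle group Tr(Γ) is a preGarside group. -/

import Mathlib

open scoped Classical

universe u

namespace SimpleGraph

/-- `y` belongs to the star of `x` in `G` (i.e. `y = x` or `y` is a neighbour of `x`). -/
def InStar {V : Type u} (G : SimpleGraph V) (x y : V) : Prop := y = x ∨ G.Adj x y

end SimpleGraph

/-- A **trickle graph**: a simplicial graph together with a partial order on the vertices,
a vertex labeling `mu` with values in `ℕ≥2 ∪ {∞}`, and, for every vertex `x`, an automorphism
`phi x` of the star of `x` (encoded as a permutation of the whole vertex set fixing every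
vertex outside of the star of `x`), subject to conditions (a)–(g) of Bellingeri–Chemin–Paris. -/
structure TrickleGraph (V : Type u) [PartialOrder V] where
  /-- the underlying simplicial graph -/
  graph : SimpleGraph V
  /-- the vertex labeling, with `⊤` playing the role of `∞` -/
  mu : V → ℕ∞
  /-- the automorphism of the star of each vertex, extended by the identity -/
  phi : V → Equiv.Perm V
  two_le_mu : ∀ x : V, 2 ≤ mu x
  /-- condition (a) -/
  adj_of_lt : ∀ x y : V, x < y → graph.Adj x y
  /-- `phi x` is supported on the star of `x` -/
  phi_apply_of_not_inStar : ∀ x y : V, ¬ graph.InStar x y → phi x y = y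
  /-- `phi x` maps the star of `x` to itself -/
  inStar_phi : ∀ x y : V, graph.InStar x y → graph.InStar x (phi x y)
  /-- `phi x` is a graph automorphism of the (full subgraph spanned by the) star of `x` -/
  adj_phi_iff : ∀ x y z : V, graph.InStar x y → graph.InStar x z →
      (graph.Adj (phi x y) (phi x z) ↔ graph.Adj y z)
  /-- condition (b) -/
  adj_incomp : ∀ x y z : V, graph.Adj x y → ¬ x ≤ y → ¬ y ≤ x → z ≤ y →
      graph.Adj x z ∧ ¬ x ≤ z ∧ ¬ z ≤ x
  /-- condition (c) -/
  le_phi_iff : ∀ x y z : V, graph.InStar x y → graph.InStar x z →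
      (phi x z ≤ phi x y ↔ z ≤ y)
  /-- condition (d) -/
  lt_of_phi_ne : ∀ x y : V, graph.InStar x y → phi x y ≠ y → y < x
  /-- condition (e): if `mu x` is finite then the order of `phi x` divides `mu x` -/
  phi_pow_mu : ∀ x : V, phi x ^ WithTop.untopD 0 (mu x) = 1
  /-- condition (f) -/
  mu_phi : ∀ x y : V, graph.InStar x y → mu (phi x y) = mu y
  /-- condition (g) -/
  phi_phi : ∀ x y z : V, z < y → y < x →
      phi x (phi y z) = phi (phi x y) (phi x z)

namespace TrickleGraph

variable {V : Type u} [PartialOrder V]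

/-- The set of defining relators of the trickle group: `x ^ (mu x)` whenever `mu x ≠ ∞`, and
`phi_x(y) · x · (phi_y(x) · y)⁻¹` for every edge `{x, y}`. -/
def rels (T : TrickleGraph V) : Set (FreeGroup V) :=
  {r | ∃ (x : V) (n : ℕ), T.mu x = (n : ℕ∞) ∧ r = FreeGroup.of x ^ n} ∪
  {r | ∃ x y : V, T.graph.Adj x y ∧
      r = FreeGroup.of (T.phi x y) * FreeGroup.of x *
          (FreeGroup.of (T.phi y x) * FreeGroup.of y)⁻¹}

end TrickleGraph

/-- The **trickle group** of a trickle graph. -/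
abbrev TrickleGroup {V : Type u} [PartialOrder V] (T : TrickleGraph V) : Type u :=
  PresentedGroup T.rels

namespace TrickleGraph

variable {V : Type u} [PartialOrder V]

/-- The image of a vertex in the trickle group. -/
def gen (T : TrickleGraph V) (x : V) : TrickleGroup T := PresentedGroup.of x

/-- `mu` converted to a natural number, with `∞` mapped to `0` (so that `ZMod (T.muNat x)`
is the group `ℤ_{mu x}` of the paper, `ZMod 0 = ℤ` corresponding to `mu x = ∞`). -/
def muNat (T : TrickleGraph V) (x : V) : ℕ := WithTop.untopD 0 (T.mu x)

/-- The power `phi_x^a` for an exponent `a ∈ ℤ_{mu x}`; it is well defined on representatives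
by condition (e). -/
def phiPow (T : TrickleGraph V) (x : V) (a : ZMod (T.muNat x)) : Equiv.Perm V :=
  T.phi x ^ (ZMod.cast a : ℤ)

theorem mu_phi_apply (T : TrickleGraph V) (x y : V) : T.mu (T.phi x y) = T.mu y := by
  by_cases h : T.graph.InStar x y
  · exact T.mu_phi x y h
  · rw [T.phi_apply_of_not_inStar x y h]

theorem mu_phi_zpow (T : TrickleGraph V) (x : V) :
    ∀ (n : ℤ) (y : V), T.mu ((T.phi x ^ n) y) = T.mu y := by
  have hinv : ∀ y : V, T.mu ((T.phi x)⁻¹ y) = T.mu y := by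
    intro y
    conv_rhs => rw [← (T.phi x).apply_symm_apply y]
    exact (T.mu_phi_apply x ((T.phi x)⁻¹ y)).symm
  intro n
  induction n using Int.induction_on with
  | zero => intro y; simp
  | succ k ih =>
      intro y
      have h : (T.phi x ^ ((k : ℤ) + 1)) y = (T.phi x ^ (k : ℤ)) (T.phi x y) := by
        rw [zpow_add_one]; rfl
      rw [h, ih (T.phi x y), T.mu_phi_apply]
  | pred k ih =>
      intro y
      have h : (T.phi x ^ (-(k : ℤ) - 1)) y = (T.phi x ^ (-(k : ℤ))) ((T.phi x)⁻¹ y) := by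
        rw [zpow_sub_one]; rfl
      rw [h, ih ((T.phi x)⁻¹ y), hinv]

theorem mu_phiPow (T : TrickleGraph V) (x : V) (a : ZMod (T.muNat x)) (y : V) :
    T.mu ((T.phiPow x a) y) = T.mu y :=
  T.mu_phi_zpow x _ y

theorem muNat_phiPow (T : TrickleGraph V) (x : V) (a : ZMod (T.muNat x)) (y : V) :
    T.muNat ((T.phiPow x a) y) = T.muNat y :=
  congrArg (fun m : ℕ∞ => WithTop.untopD 0 m) (T.mu_phiPow x a y)

end TrickleGraph

/-- Transport of a `ZMod` element along an equality of moduli. -/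
def zmodCongr {m k : ℕ} (h : m = k) (a : ZMod m) : ZMod k := by subst h; exact a

theorem zmodCongr_ne_zero {m k : ℕ} (h : m = k) {a : ZMod m} (ha : a ≠ 0) :
    zmodCongr h a ≠ 0 := by subst h; exact ha

/-- A **syllable** `x^a`, where `x` is a vertex and `a ∈ ℤ_{mu x} \ {0}`. -/
def Syllable {V : Type u} [PartialOrder V] (T : TrickleGraph V) : Type u :=
  Σ x : V, {a : ZMod (T.muNat x) // a ≠ 0}

namespace Syllable

variable {V : Type u} [PartialOrder V] {T : TrickleGraph V}

/-- The element of the trickle group represented by a syllable. -/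
def elm (s : Syllable T) : TrickleGroup T :=
  (PresentedGroup.of s.1 : TrickleGroup T) ^ (ZMod.cast s.2.val : ℤ)

end Syllable

/-- Syllabic words. -/
abbrev SylWord {V : Type u} [PartialOrder V] (T : TrickleGraph V) := List (Syllable T)

/-- The element of the trickle group represented by a syllabic word. -/
def SylWord.eval {V : Type u} [PartialOrder V] {T : TrickleGraph V} (w : SylWord T) :
    TrickleGroup T :=
  (w.map Syllable.elm).prod

/-- The defining relations of the **preGarside trickle monoid** `Tr⁺(Γ)`:
`phi_x(y) · x = phi_y(x) · y` for every edge `{x, y}`. -/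
def TrickleGraph.monRels {V : Type u} [PartialOrder V] (T : TrickleGraph V) :
    FreeMonoid V → FreeMonoid V → Prop := fun u v =>
  ∃ x y : V, T.graph.Adj x y ∧
    u = FreeMonoid.of (T.phi x y) * FreeMonoid.of x ∧
    v = FreeMonoid.of (T.phi y x) * FreeMonoid.of y

/-- The **preGarside trickle monoid** `Tr⁺(Γ)` of a (preGarside) trickle graph. -/
abbrev TrickleMonoid {V : Type u} [PartialOrder V] (T : TrickleGraph V) : Type u :=
  PresentedMonoid T.monRels

section PreGarside

variable {M : Type*} [Monoid M]

/-- Left divisibility: `a ≤_L b` iff `a c = b` for some `c`. -/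
def DvdL (a b : M) : Prop := ∃ c, a * c = b

/-- Right divisibility: `a ≤_R b` iff `c a = b` for some `c`. -/
def DvdR (a b : M) : Prop := ∃ c, c * a = b

/-- `m` is the least common upper bound of `a` and `b` for left divisibility. -/
def IsLcmL (a b m : M) : Prop :=
  (DvdL a m ∧ DvdL b m) ∧ ∀ c, DvdL a c → DvdL b c → DvdL m c

/-- `m` is the least common upper bound of `a` and `b` for right divisibility. -/
def IsLcmR (a b m : M) : Prop :=
  (DvdR a m ∧ DvdR b m) ∧ ∀ c, DvdR a c → DvdR b c → DvdR m c

/-- A **preGarside monoid**: a cancellative atomic monoid in which any two elements admitting a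
common upper bound for left (resp. right) divisibility admit a least one. -/
def IsPreGarsideMonoid (M : Type*) [Monoid M] : Prop :=
  (∀ a b c d : M, c * a * d = c * b * d → a = b) ∧
  (∃ ν : M → ℕ, (∀ a : M, ν a = 0 ↔ a = 1) ∧ ∀ a b : M, ν a + ν b ≤ ν (a * b)) ∧
  (∀ a b : M, (∃ c, DvdL a c ∧ DvdL b c) → ∃ m, IsLcmL a b m) ∧
  (∀ a b : M, (∃ c, DvdR a c ∧ DvdR b c) → ∃ m, IsLcmR a b m)

/-- A **Garside element**: a balanced element whose set of divisors generates the monoid. -/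
def IsGarsideElement (Δ : M) : Prop :=
  {a : M | DvdL a Δ} = {a : M | DvdR a Δ} ∧ Submonoid.closure {a : M | DvdL a Δ} = ⊤

/-- A **Garside monoid**: a preGarside monoid containing a Garside element. -/
def IsGarsideMonoid (M : Type*) [Monoid M] : Prop :=
  IsPreGarsideMonoid M ∧ ∃ Δ : M, IsGarsideElement Δ

/-- A **special** submonoid: closed under taking factors. -/
def Submonoid.IsSpecial (N : Submonoid M) : Prop := ∀ a b : M, a * b ∈ N → a ∈ N ∧ b ∈ N

/-- A **parabolic submonoid** of a (preGarside) monoid: a special submonoid closed under the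
least common upper bounds `∨_L` and `∨_R` whenever they exist. -/
def Submonoid.IsParabolic (N : Submonoid M) : Prop :=
  N.IsSpecial ∧
  (∀ a b m : M, a ∈ N → b ∈ N → IsLcmL a b m → m ∈ N) ∧
  (∀ a b m : M, a ∈ N → b ∈ N → IsLcmR a b m → m ∈ N)

end PreGarside

/-- Relators defining the **enveloping group** of a monoid `M`: the enveloping group is
generated by the elements of `M` subject to the relations `of (a b) = of a · of b`. -/
def envRels (M : Type u) [Monoid M] : Set (FreeGroup M) :=
  {r | ∃ a b : M, r = FreeGroup.of (a * b) * (FreeGroup.of a * FreeGroup.of b)⁻¹}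

/-- The **enveloping group** `G(M)` of a monoid `M`. -/
abbrev EnvGroup (M : Type u) [Monoid M] : Type u := PresentedGroup (envRels M)

/-- The natural map `M → G(M)`. -/
def envOf (M : Type u) [Monoid M] (a : M) : EnvGroup M := PresentedGroup.of a

namespace Equiv.Perm

theorem apply_inv_self {α : Type*} (f : Equiv.Perm α) (x : α) : f (f⁻¹ x) = x :=
  f.apply_symm_apply x

theorem inv_apply_self {α : Type*} (f : Equiv.Perm α) (x : α) : f⁻¹ (f x) = x :=
  f.symm_apply_apply x

end Equiv.Perm

/-! ### Auxiliary development for Theorem 2.14 -/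

namespace TrickleGraph

variable {V : Type u} [PartialOrder V] (T : TrickleGraph V)

section Basics

theorem instar_self (x : V) : T.graph.InStar x x := Or.inl rfl

theorem instar_of_adj {x y : V} (h : T.graph.Adj x y) : T.graph.InStar x y := Or.inr h

theorem phi_fix (x : V) : T.phi x x = x := by
  by_contra h
  exact lt_irrefl x (T.lt_of_phi_ne x x (T.instar_self x) h)

theorem instar_phi_iff (x y : V) : T.graph.InStar x (T.phi x y) ↔ T.graph.InStar x y := by
  constructor
  · intro h
    by_contra hy
    rw [T.phi_apply_of_not_inStar x y hy] at h
    exact hy h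
  · exact T.inStar_phi x y

theorem instar_phi_inv_iff (x y : V) :
    T.graph.InStar x ((T.phi x)⁻¹ y) ↔ T.graph.InStar x y := by
  rw [← T.instar_phi_iff x ((T.phi x)⁻¹ y), Equiv.Perm.apply_inv_self]

theorem le_phi_inv_iff {x y z : V} (hy : T.graph.InStar x y) (hz : T.graph.InStar x z) :
    (T.phi x)⁻¹ z ≤ (T.phi x)⁻¹ y ↔ z ≤ y := by
  have := T.le_phi_iff x ((T.phi x)⁻¹ y) ((T.phi x)⁻¹ z)
    ((T.instar_phi_inv_iff x y).2 hy) ((T.instar_phi_inv_iff x z).2 hz)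
  rw [Equiv.Perm.apply_inv_self, Equiv.Perm.apply_inv_self] at this
  exact this.symm

theorem lt_phi_iff {x y z : V} (hy : T.graph.InStar x y) (hz : T.graph.InStar x z) :
    T.phi x z < T.phi x y ↔ z < y := by
  rw [lt_iff_le_not_ge, lt_iff_le_not_ge, T.le_phi_iff x y z hy hz, T.le_phi_iff x z y hz hy]

theorem lt_phi_inv_iff {x y z : V} (hy : T.graph.InStar x y) (hz : T.graph.InStar x z) :
    (T.phi x)⁻¹ z < (T.phi x)⁻¹ y ↔ z < y := by
  rw [lt_iff_le_not_ge, lt_iff_le_not_ge, T.le_phi_inv_iff hy hz, T.le_phi_inv_iff hz hy]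

theorem phi_lt_self_iff {x z : V} (hz : T.graph.InStar x z) : T.phi x z < x ↔ z < x := by
  have := T.lt_phi_iff (T.instar_self x) hz
  rwa [T.phi_fix x] at this

theorem phi_inv_fix (x : V) : (T.phi x)⁻¹ x = x := by
  apply (T.phi x).injective
  rw [Equiv.Perm.apply_inv_self, T.phi_fix]

theorem phi_inv_lt_self_iff {x z : V} (hz : T.graph.InStar x z) :
    (T.phi x)⁻¹ z < x ↔ z < x := by
  have := T.lt_phi_inv_iff (T.instar_self x) hz
  rwa [T.phi_inv_fix] at this

theorem adj_phi_inv_iff {x y z : V} (hy : T.graph.InStar x y) (hz : T.graph.InStar x z) :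
    T.graph.Adj ((T.phi x)⁻¹ y) ((T.phi x)⁻¹ z) ↔ T.graph.Adj y z := by
  have := T.adj_phi_iff x ((T.phi x)⁻¹ y) ((T.phi x)⁻¹ z)
    ((T.instar_phi_inv_iff x y).2 hy) ((T.instar_phi_inv_iff x z).2 hz)
  rw [Equiv.Perm.apply_inv_self, Equiv.Perm.apply_inv_self] at this
  exact this.symm

theorem phi_eq_of_not_lt {x y : V} (hy : T.graph.InStar x y) (h : ¬ y < x) :
    T.phi x y = y := by
  by_contra hne
  exact h (T.lt_of_phi_ne x y hy hne)

theorem phi_inv_eq_of_not_lt {x y : V} (hy : T.graph.InStar x y) (h : ¬ y < x) :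
    (T.phi x)⁻¹ y = y := by
  apply (T.phi x).injective
  rw [Equiv.Perm.apply_inv_self, T.phi_eq_of_not_lt hy h]

end Basics

section Theta

/-- The right-complement on letters: `theta x y` is what `y` becomes when it is pushed
past `x` (to the right). -/
noncomputable def theta (x y : V) : V :=
  if y < x then (T.phi x)⁻¹ y else y

theorem theta_of_lt {x y : V} (h : y < x) : T.theta x y = (T.phi x)⁻¹ y := if_pos h

theorem theta_of_not_lt {x y : V} (h : ¬ y < x) : T.theta x y = y := if_neg h

theorem theta_instar {x y : V} (h : T.graph.InStar x y) :
    T.graph.InStar x (T.theta x y) := by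
  unfold theta
  split
  · exact (T.instar_phi_inv_iff x y).2 h
  · exact h

theorem theta_lt_self_iff {x y : V} (h : T.graph.InStar x y) :
    T.theta x y < x ↔ y < x := by
  unfold theta
  split
  · exact T.phi_inv_lt_self_iff h
  · rfl

theorem theta_inj {x y z : V} (hy : T.graph.InStar x y) (hz : T.graph.InStar x z)
    (h : T.theta x y = T.theta x z) : y = z := by
  unfold theta at h
  split at h <;> split at h
  · exact (T.phi x)⁻¹.injective h
  · exfalso
    rename_i h1 h2
    exact h2 (h ▸ (T.phi_inv_lt_self_iff hy).2 h1)
  · exfalso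
    rename_i h1 h2
    exact h1 (h ▸ (T.phi_inv_lt_self_iff hz).2 h2)
  · exact h

end Theta

end TrickleGraph

namespace TrickleGraph

variable {V : Type u} [PartialOrder V] (T : TrickleGraph V)

section Cube

theorem adj_theta_mixed {x y z : V} (hxz : T.graph.Adj x z) (hyz : T.graph.Adj y z)
    (h1 : x < z) (h2 : ¬ y < z) : T.graph.Adj ((T.phi z)⁻¹ x) y := by
  have Szx : T.graph.InStar z x := T.instar_of_adj hxz.symm
  have hlt : (T.phi z)⁻¹ x < z := (T.phi_inv_lt_self_iff Szx).2 h1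
  by_cases hzy : z < y
  · exact T.adj_of_lt _ _ (lt_trans hlt hzy)
  · have hne : y ≠ z := hyz.ne
    have hnyz : ¬ y ≤ z := fun h => h2 (lt_of_le_of_ne h hne)
    have hnzy : ¬ z ≤ y := fun h => hzy (lt_of_le_of_ne h (Ne.symm hne))
    exact (T.adj_incomp y z ((T.phi z)⁻¹ x) hyz hnyz hnzy (le_of_lt hlt)).1.symm

/-- "CD2": adjacency is preserved by pushing past a common neighbour. -/
theorem adj_theta_theta {x y z : V} (hxz : T.graph.Adj x z) (hyz : T.graph.Adj y z)
    (hxy : T.graph.Adj x y) : T.graph.Adj (T.theta z x) (T.theta z y) := by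
  have Szx : T.graph.InStar z x := T.instar_of_adj hxz.symm
  have Szy : T.graph.InStar z y := T.instar_of_adj hyz.symm
  by_cases h1 : x < z <;> by_cases h2 : y < z
  · rw [T.theta_of_lt h1, T.theta_of_lt h2]
    exact (T.adj_phi_inv_iff Szx Szy).2 hxy
  · rw [T.theta_of_lt h1, T.theta_of_not_lt h2]
    exact T.adj_theta_mixed hxz hyz h1 h2
  · rw [T.theta_of_not_lt h1, T.theta_of_lt h2]
    exact (T.adj_theta_mixed hyz hxz h2 h1).symm
  · rw [T.theta_of_not_lt h1, T.theta_of_not_lt h2]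
    exact hxy

theorem adj_of_common_mixed {x y z : V} (hxz : T.graph.Adj x z) (hyz : T.graph.Adj y z)
    (h1 : x < z) (h2 : ¬ y < z) : T.graph.Adj x y := by
  by_cases hzy : z < y
  · exact T.adj_of_lt _ _ (lt_trans h1 hzy)
  · have hne : y ≠ z := hyz.ne
    have hnyz : ¬ y ≤ z := fun h => h2 (lt_of_le_of_ne h hne)
    have hnzy : ¬ z ≤ y := fun h => hzy (lt_of_le_of_ne h (Ne.symm hne))
    exact (T.adj_incomp y z x hyz hnyz hnzy (le_of_lt h1)).1.symm

/-- "CD": adjacency is reflected by pushing past a common neighbour. -/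
theorem adj_of_adj_theta_theta {x y z : V} (hxz : T.graph.Adj x z) (hyz : T.graph.Adj y z)
    (h : T.graph.Adj (T.theta z x) (T.theta z y)) : T.graph.Adj x y := by
  have Szx : T.graph.InStar z x := T.instar_of_adj hxz.symm
  have Szy : T.graph.InStar z y := T.instar_of_adj hyz.symm
  by_cases h1 : x < z <;> by_cases h2 : y < z
  · rw [T.theta_of_lt h1, T.theta_of_lt h2] at h
    exact (T.adj_phi_inv_iff Szx Szy).1 h
  · exact T.adj_of_common_mixed hxz hyz h1 h2
  · exact (T.adj_of_common_mixed hyz hxz h2 h1).symm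
  · rw [T.theta_of_not_lt h1, T.theta_of_not_lt h2] at h
    exact h

theorem cube_of_lt {a b c : V} (hab : T.graph.Adj a b) (hac : T.graph.Adj a c)
    (hbc : T.graph.Adj b c) (hba : b < a) :
    T.theta (T.theta a b) (T.theta a c) = T.theta (T.theta b a) (T.theta b c) := by
  have Sab : T.graph.InStar a b := T.instar_of_adj hab
  have Sac : T.graph.InStar a c := T.instar_of_adj hac
  have Sbc : T.graph.InStar b c := T.instar_of_adj hbc
  rw [T.theta_of_lt hba, T.theta_of_not_lt (lt_asymm hba)]
  by_cases hcb : c < b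
  · have hca : c < a := lt_trans hcb hba
    rw [T.theta_of_lt hca, T.theta_of_lt hcb]
    have hfb : (T.phi a)⁻¹ c < (T.phi a)⁻¹ b := (T.lt_phi_inv_iff Sab Sac).2 hcb
    rw [T.theta_of_lt hfb]
    have hfbc_lt_b : (T.phi b)⁻¹ c < b := (T.phi_inv_lt_self_iff Sbc).2 hcb
    have hfbc_lt_a : (T.phi b)⁻¹ c < a := lt_trans hfbc_lt_b hba
    rw [T.theta_of_lt hfbc_lt_a]
    have Sabc : T.graph.InStar a ((T.phi b)⁻¹ c) :=
      T.instar_of_adj (T.adj_of_lt _ _ hfbc_lt_a).symm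
    have hz' : (T.phi a)⁻¹ ((T.phi b)⁻¹ c) < (T.phi a)⁻¹ b :=
      (T.lt_phi_inv_iff Sab Sabc).2 hfbc_lt_b
    have hb' : (T.phi a)⁻¹ b < a := (T.phi_inv_lt_self_iff Sab).2 hba
    have hg := T.phi_phi a ((T.phi a)⁻¹ b) ((T.phi a)⁻¹ ((T.phi b)⁻¹ c)) hz' hb'
    rw [Equiv.Perm.apply_inv_self, Equiv.Perm.apply_inv_self,
      Equiv.Perm.apply_inv_self] at hg
    have key : T.phi ((T.phi a)⁻¹ b) ((T.phi a)⁻¹ ((T.phi b)⁻¹ c)) = (T.phi a)⁻¹ c := by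
      apply (T.phi a).injective
      rw [Equiv.Perm.apply_inv_self, hg]
    calc (T.phi ((T.phi a)⁻¹ b))⁻¹ ((T.phi a)⁻¹ c)
        = (T.phi ((T.phi a)⁻¹ b))⁻¹
            (T.phi ((T.phi a)⁻¹ b) ((T.phi a)⁻¹ ((T.phi b)⁻¹ c))) := by rw [key]
      _ = (T.phi a)⁻¹ ((T.phi b)⁻¹ c) := Equiv.Perm.inv_apply_self _ _
  · rw [T.theta_of_not_lt hcb]
    by_cases hca : c < a
    · rw [T.theta_of_lt hca]
      have hn : ¬ (T.phi a)⁻¹ c < (T.phi a)⁻¹ b := by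
        rw [T.lt_phi_inv_iff Sab Sac]; exact hcb
      rw [T.theta_of_not_lt hn]
    · rw [T.theta_of_not_lt hca]
      have hb' : (T.phi a)⁻¹ b < a := (T.phi_inv_lt_self_iff Sab).2 hba
      have hn : ¬ c < (T.phi a)⁻¹ b := fun hlt => hca (lt_trans hlt hb')
      rw [T.theta_of_not_lt hn]

theorem cube_of_incomp {a b c : V} (hab : T.graph.Adj a b) (hac : T.graph.Adj a c)
    (hbc : T.graph.Adj b c) (h1 : ¬ a ≤ b) (h2 : ¬ b ≤ a) :
    T.theta (T.theta a b) (T.theta a c) = T.theta (T.theta b a) (T.theta b c) := by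
  have Sab : T.graph.InStar a b := T.instar_of_adj hab
  have Sac : T.graph.InStar a c := T.instar_of_adj hac
  have Sbc : T.graph.InStar b c := T.instar_of_adj hbc
  rw [T.theta_of_not_lt (fun h => h2 (le_of_lt h)), T.theta_of_not_lt (fun h => h1 (le_of_lt h))]
  by_cases hca : c < a
  · have hbca := T.adj_incomp b a c hab.symm h2 h1 (le_of_lt hca)
    rw [T.theta_of_lt hca, T.theta_of_not_lt (fun h => hbca.2.2 (le_of_lt h))]
    have hfa : (T.phi a)⁻¹ c < a := (T.phi_inv_lt_self_iff Sac).2 hca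
    have hbfa := T.adj_incomp b a ((T.phi a)⁻¹ c) hab.symm h2 h1 (le_of_lt hfa)
    rw [T.theta_of_lt hca, T.theta_of_not_lt (fun h => hbfa.2.2 (le_of_lt h))]
  · rw [T.theta_of_not_lt hca]
    by_cases hcb : c < b
    · rw [T.theta_of_lt hcb]
      have hfb : (T.phi b)⁻¹ c < b := (T.phi_inv_lt_self_iff Sbc).2 hcb
      have hafb := T.adj_incomp a b ((T.phi b)⁻¹ c) hab h1 h2 (le_of_lt hfb)
      rw [T.theta_of_not_lt (fun h => hafb.2.2 (le_of_lt h))]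
    · rw [T.theta_of_not_lt hcb, T.theta_of_not_lt hca]

/-- The cube condition for the letter complement `theta`. -/
theorem cube {a b c : V} (hab : T.graph.Adj a b) (hac : T.graph.Adj a c)
    (hbc : T.graph.Adj b c) :
    T.theta (T.theta a b) (T.theta a c) = T.theta (T.theta b a) (T.theta b c) := by
  by_cases hba : b < a
  · exact T.cube_of_lt hab hac hbc hba
  by_cases hab' : a < b
  · exact (T.cube_of_lt hab.symm hbc hac hab').symm
  · exact T.cube_of_incomp hab hac hbc
      (fun h => hab' (lt_of_le_of_ne h hab.ne))
      (fun h => hba (lt_of_le_of_ne h (Ne.symm hab.ne)))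

end Cube

end TrickleGraph

namespace TrickleGraph

variable {V : Type u} [PartialOrder V] (T : TrickleGraph V)

section Reversing

/-- Reversing of a single letter `x` against a word `v`: returns the pair
`(x\v, v\x)` when defined. -/
noncomputable def lcr : V → List V → Option (List V × List V)
  | x, [] => some ([], [x])
  | x, y :: v =>
    if x = y then some (v, [])
    else if T.graph.Adj x y then
      (lcr (T.theta y x) v).map (fun p => (T.theta x y :: p.1, p.2))
    else none

/-- Reversing of a word `u` against a word `v`: returns the pair `(u\v, v\u)` when defined. -/
noncomputable def wcr : List V → List V → Option (List V × List V)
  | [], v => some (v, [])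
  | x :: u, v => (T.lcr x v).bind (fun p => (wcr u p.1).map (fun q => (q.1, p.2 ++ q.2)))

@[simp] theorem lcr_nil (x : V) : T.lcr x [] = some ([], [x]) := rfl

theorem lcr_cons (x y : V) (v : List V) :
    T.lcr x (y :: v) =
      if x = y then some (v, [])
      else if T.graph.Adj x y then
        (T.lcr (T.theta y x) v).map (fun p => (T.theta x y :: p.1, p.2))
      else none := by
  rw [lcr]

@[simp] theorem lcr_cons_self (x : V) (v : List V) : T.lcr x (x :: v) = some (v, []) := by
  rw [lcr_cons, if_pos rfl]

theorem lcr_cons_adj {x y : V} (hne : x ≠ y) (hadj : T.graph.Adj x y) (v : List V) :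
    T.lcr x (y :: v) = (T.lcr (T.theta y x) v).map (fun p => (T.theta x y :: p.1, p.2)) := by
  rw [lcr_cons, if_neg hne, if_pos hadj]

theorem lcr_cons_nadj {x y : V} (hne : x ≠ y) (hadj : ¬ T.graph.Adj x y) (v : List V) :
    T.lcr x (y :: v) = none := by
  rw [lcr_cons, if_neg hne, if_neg hadj]

@[simp] theorem wcr_nil (v : List V) : T.wcr [] v = some (v, []) := rfl

theorem wcr_cons (x : V) (u v : List V) :
    T.wcr (x :: u) v =
      (T.lcr x v).bind (fun p => (T.wcr u p.1).map (fun q => (q.1, p.2 ++ q.2))) := by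
  rw [wcr]

@[simp] theorem wcr_nil_right (u : List V) : T.wcr u [] = some ([], u) := by
  induction u with
  | nil => rfl
  | cons x u ih => rw [wcr_cons, lcr_nil, Option.bind_some, ih]; rfl

@[simp] theorem wcr_singleton (x : V) (v : List V) : T.wcr [x] v = T.lcr x v := by
  rw [wcr_cons]
  rcases h : T.lcr x v with _ | p
  · rfl
  · simp

/-- Length bookkeeping for letter reversing. -/
theorem lcr_length {x : V} {v A r : List V} (h : T.lcr x v = some (A, r)) :
    1 + A.length = v.length + r.length ∧ r.length ≤ 1 := by
  induction v generalizing x A r with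
  | nil =>
    rw [lcr_nil] at h
    simp only [Option.some_inj, Prod.mk.injEq] at h
    obtain ⟨rfl, rfl⟩ := h
    simp
  | cons y v ih =>
    by_cases hxy : x = y
    · subst hxy
      rw [lcr_cons_self] at h
      simp only [Option.some_inj, Prod.mk.injEq] at h
      obtain ⟨rfl, rfl⟩ := h
      simp only [List.length_cons, List.length_nil]
      omega
    · by_cases hadj : T.graph.Adj x y
      · rw [lcr_cons_adj T hxy hadj] at h
        rcases h' : T.lcr (T.theta y x) v with _ | ⟨A', r'⟩
        · rw [h'] at h; simp at h
        · rw [h'] at h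
          simp only [Option.map_some, Option.some_inj, Prod.mk.injEq] at h
          obtain ⟨rfl, rfl⟩ := h
          have := ih h'
          simp only [List.length_cons]
          omega
      · rw [lcr_cons_nadj T hxy hadj] at h; simp at h

theorem wcr_length {u v A B : List V} (h : T.wcr u v = some (A, B)) :
    u.length + A.length = v.length + B.length := by
  induction u generalizing v A B with
  | nil =>
    rw [wcr_nil] at h
    simp only [Option.some_inj, Prod.mk.injEq] at h
    obtain ⟨rfl, rfl⟩ := h
    simp
  | cons x u ih =>
    rw [wcr_cons] at h
    rcases h1 : T.lcr x v with _ | ⟨A₁, r₁⟩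
    · rw [h1] at h; simp at h
    · rw [h1] at h
      simp only [Option.bind_some] at h
      rcases h2 : T.wcr u A₁ with _ | ⟨A₂, B₂⟩
      · rw [h2] at h; simp at h
      · rw [h2] at h
        simp only [Option.map_some, Option.some_inj, Prod.mk.injEq] at h
        obtain ⟨rfl, rfl⟩ := h
        have e1 := (T.lcr_length h1).1
        have e2 := ih h2
        simp only [List.length_cons, List.length_append]
        omega

end Reversing

end TrickleGraph

namespace TrickleGraph

variable {V : Type u} [PartialOrder V] (T : TrickleGraph V)

section Grid

theorem wcr_append_left (u₁ u₂ v : List V) :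
    T.wcr (u₁ ++ u₂) v =
      (T.wcr u₁ v).bind (fun p => (T.wcr u₂ p.1).map (fun q => (q.1, p.2 ++ q.2))) := by
  induction u₁ generalizing v with
  | nil =>
    simp only [List.nil_append, wcr_nil, Option.bind_some]
    rcases h : T.wcr u₂ v with _ | ⟨A, B⟩ <;> simp
  | cons x u₁ ih =>
    rw [List.cons_append, wcr_cons, wcr_cons]
    rcases h1 : T.lcr x v with _ | ⟨A₁, r₁⟩
    · simp
    · simp only [Option.bind_some]
      rw [ih]
      rcases h2 : T.wcr u₁ A₁ with _ | ⟨B, C⟩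
      · simp
      · simp only [Option.bind_some, Option.map_some]
        rcases h3 : T.wcr u₂ B with _ | ⟨D, E⟩ <;> simp [List.append_assoc]

theorem lcr_append (x : V) (v₁ v₂ : List V) :
    T.lcr x (v₁ ++ v₂) =
      (T.lcr x v₁).bind (fun p => (T.wcr p.2 v₂).map (fun q => (p.1 ++ q.1, q.2))) := by
  induction v₁ generalizing x with
  | nil =>
    simp only [List.nil_append, lcr_nil, Option.bind_some, wcr_singleton]
    rcases h : T.lcr x v₂ with _ | ⟨A, B⟩ <;> simp
  | cons y v₁ ih =>
    by_cases hxy : x = y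
    · subst hxy
      rw [List.cons_append, lcr_cons_self, lcr_cons_self]
      simp
    · by_cases hadj : T.graph.Adj x y
      · rw [List.cons_append, lcr_cons_adj T hxy hadj, lcr_cons_adj T hxy hadj, ih]
        rcases h1 : T.lcr (T.theta y x) v₁ with _ | ⟨A, r⟩
        · simp
        · simp only [Option.bind_some, Option.map_some]
          rcases h2 : T.wcr r v₂ with _ | ⟨C, D⟩ <;> simp
      · rw [List.cons_append, lcr_cons_nadj T hxy hadj, lcr_cons_nadj T hxy hadj]
        simp

theorem wcr_append_right (u v₁ v₂ : List V) :
    T.wcr u (v₁ ++ v₂) =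
      (T.wcr u v₁).bind (fun p => (T.wcr p.2 v₂).map (fun q => (p.1 ++ q.1, q.2))) := by
  induction u generalizing v₁ v₂ with
  | nil =>
    simp
  | cons x u ih =>
    rw [wcr_cons, wcr_cons, lcr_append]
    rcases h1 : T.lcr x v₁ with _ | ⟨A₁, r₁⟩
    · simp
    · simp only [Option.bind_some]
      rcases h2 : T.wcr u A₁ with _ | ⟨B, C₁⟩
      · rcases h3 : T.wcr r₁ v₂ with _ | ⟨C, D⟩
        · simp
        · simp only [Option.map_some, Option.bind_some]
          rw [ih]
          rw [h2]
          simp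
      · rcases h3 : T.wcr r₁ v₂ with _ | ⟨C, D⟩
        · simp only [Option.map_some, Option.bind_some, Option.bind_none,
            Option.map_none, Option.bind_none]
          rw [wcr_append_left, h3]
          simp
        · simp only [Option.map_some, Option.bind_some]
          rw [ih, h2, wcr_append_left, h3]
          simp only [Option.bind_some]
          rcases h4 : T.wcr C₁ C with _ | ⟨E, F⟩ <;> simp

theorem wcr_swap_letter (v : List V) (x : V) :
    T.wcr v [x] = (T.lcr x v).map (fun p => (p.2, p.1)) := by
  induction v generalizing x with
  | nil => simp
  | cons y v ih =>
    by_cases hyx : y = x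
    · subst hyx
      rw [wcr_cons, lcr_cons_self, lcr_cons_self]
      simp
    · have hxy : x ≠ y := Ne.symm hyx
      by_cases hadj : T.graph.Adj y x
      · rw [wcr_cons, lcr_cons_adj T hyx hadj, lcr_nil, lcr_cons_adj T hxy hadj.symm]
        simp only [Option.map_some, Option.bind_some]
        rw [ih]
        rcases h1 : T.lcr (T.theta y x) v with _ | ⟨A, r⟩ <;> simp
      · rw [wcr_cons, lcr_cons_nadj T hyx hadj,
          lcr_cons_nadj T hxy (fun h => hadj h.symm)]
        simp

theorem wcr_swap_aux :
    ∀ n, ∀ u v : List V, u.length + v.length ≤ n →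
      T.wcr v u = (T.wcr u v).map (fun p => (p.2, p.1)) := by
  intro n
  induction n with
  | zero =>
    intro u v h
    rw [Nat.le_zero, Nat.add_eq_zero] at h
    obtain ⟨hu, hv⟩ := h
    rw [List.length_eq_zero_iff] at hu hv
    subst hu; subst hv
    simp
  | succ n ih =>
    intro u v hlen
    cases u with
    | nil => simp
    | cons x u =>
      have : (x :: u) = [x] ++ u := rfl
      rw [this, wcr_append_right, wcr_append_left, wcr_swap_letter, wcr_singleton]
      rcases h1 : T.lcr x v with _ | ⟨A, r⟩
      · simp
      · simp only [Option.map_some, Option.bind_some]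
        have hA : A.length ≤ v.length := by
          have := T.lcr_length h1
          omega
        have : T.wcr A u = (T.wcr u A).map (fun p => (p.2, p.1)) := by
          apply ih
          simp only [List.length_cons] at hlen
          omega
        rw [this]
        rcases h2 : T.wcr u A with _ | ⟨B, C⟩ <;> simp

theorem wcr_swap (u v : List V) :
    T.wcr v u = (T.wcr u v).map (fun p => (p.2, p.1)) :=
  T.wcr_swap_aux (u.length + v.length) u v le_rfl

end Grid

end TrickleGraph

namespace TrickleGraph

variable {V : Type u} [PartialOrder V] (T : TrickleGraph V)

section Soundness

/-- The class of a word in the trickle monoid. -/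
noncomputable def mkl (w : List V) : TrickleMonoid T :=
  PresentedMonoid.mk T.monRels (FreeMonoid.ofList w)

theorem mkl_append (u v : List V) : T.mkl (u ++ v) = T.mkl u * T.mkl v := by
  unfold mkl
  rw [FreeMonoid.ofList_append, map_mul]

theorem mkl_nil : T.mkl [] = 1 := map_one _

theorem mkl_cons (x : V) (w : List V) : T.mkl (x :: w) = T.mkl [x] * T.mkl w :=
  T.mkl_append [x] w

theorem mk_eq_of_rel {a b : FreeMonoid V} (h : T.monRels a b) :
    PresentedMonoid.mk T.monRels a = PresentedMonoid.mk T.monRels b :=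
  Quot.sound (ConGen.Rel.of a b h)

theorem mkl_two (a b : V) : T.mkl [a, b] =
    PresentedMonoid.mk T.monRels (FreeMonoid.of a * FreeMonoid.of b) := rfl

/-- Soundness of a single reversing cell. -/
theorem cell_sound {x y : V} (hne : x ≠ y) (hadj : T.graph.Adj x y) :
    T.mkl [x, T.theta x y] = T.mkl [y, T.theta y x] := by
  rw [mkl_two, mkl_two]
  by_cases hyx : y < x
  · have hlt : (T.phi x)⁻¹ y < x := (T.phi_inv_lt_self_iff (T.instar_of_adj hadj)).2 hyx
    have hadjb : T.graph.Adj ((T.phi x)⁻¹ y) x := T.adj_of_lt _ _ hlt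
    rw [T.theta_of_lt hyx, T.theta_of_not_lt (lt_asymm hyx)]
    refine (T.mk_eq_of_rel ⟨x, (T.phi x)⁻¹ y, hadjb.symm, ?_, ?_⟩).symm
    · rw [Equiv.Perm.apply_inv_self]
    · rw [T.phi_eq_of_not_lt (T.instar_of_adj hadjb) (lt_asymm hlt)]
  · by_cases hxy : x < y
    · have hlt : (T.phi y)⁻¹ x < y := (T.phi_inv_lt_self_iff (T.instar_of_adj hadj.symm)).2 hxy
      have hadjb : T.graph.Adj ((T.phi y)⁻¹ x) y := T.adj_of_lt _ _ hlt
      rw [T.theta_of_lt hxy, T.theta_of_not_lt hyx]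
      refine T.mk_eq_of_rel ⟨y, (T.phi y)⁻¹ x, hadjb.symm, ?_, ?_⟩
      · rw [Equiv.Perm.apply_inv_self]
      · rw [T.phi_eq_of_not_lt (T.instar_of_adj hadjb) (lt_asymm hlt)]
    · rw [T.theta_of_not_lt hyx, T.theta_of_not_lt hxy]
      refine T.mk_eq_of_rel ⟨y, x, hadj.symm, ?_, ?_⟩
      · rw [T.phi_eq_of_not_lt (T.instar_of_adj hadj.symm) hxy]
      · rw [T.phi_eq_of_not_lt (T.instar_of_adj hadj) hyx]

theorem lcr_sound {x : V} {v A r : List V} (h : T.lcr x v = some (A, r)) :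
    T.mkl (x :: A) = T.mkl (v ++ r) := by
  induction v generalizing x A r with
  | nil =>
    rw [lcr_nil] at h
    simp only [Option.some_inj, Prod.mk.injEq] at h
    obtain ⟨rfl, rfl⟩ := h
    rfl
  | cons y v ih =>
    by_cases hxy : x = y
    · subst hxy
      rw [lcr_cons_self] at h
      simp only [Option.some_inj, Prod.mk.injEq] at h
      obtain ⟨rfl, rfl⟩ := h
      rw [List.append_nil]
    · by_cases hadj : T.graph.Adj x y
      · rw [lcr_cons_adj T hxy hadj] at h
        rcases h' : T.lcr (T.theta y x) v with _ | ⟨A', r'⟩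
        · rw [h'] at h; simp at h
        · rw [h'] at h
          simp only [Option.map_some, Option.some_inj, Prod.mk.injEq] at h
          obtain ⟨rfl, rfl⟩ := h
          have ihh := ih h'
          calc T.mkl (x :: T.theta x y :: A')
              = T.mkl [x, T.theta x y] * T.mkl A' := T.mkl_append [x, T.theta x y] A'
            _ = T.mkl [y, T.theta y x] * T.mkl A' := by rw [T.cell_sound hxy hadj]
            _ = T.mkl [y] * T.mkl (T.theta y x :: A') := by
                rw [← T.mkl_append, ← T.mkl_append]
                rfl
            _ = T.mkl [y] * T.mkl (v ++ r') := by rw [ihh]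
            _ = T.mkl (y :: (v ++ r')) := (T.mkl_cons y (v ++ r')).symm
      · rw [lcr_cons_nadj T hxy hadj] at h; simp at h

theorem wcr_sound {u v A B : List V} (h : T.wcr u v = some (A, B)) :
    T.mkl (u ++ A) = T.mkl (v ++ B) := by
  induction u generalizing v A B with
  | nil =>
    rw [wcr_nil] at h
    simp only [Option.some_inj, Prod.mk.injEq] at h
    obtain ⟨rfl, rfl⟩ := h
    rw [List.nil_append, List.append_nil]
  | cons x u ih =>
    rw [wcr_cons] at h
    rcases h1 : T.lcr x v with _ | ⟨A₁, r₁⟩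
    · rw [h1] at h; simp at h
    · rw [h1] at h
      simp only [Option.bind_some] at h
      rcases h2 : T.wcr u A₁ with _ | ⟨A₂, B₂⟩
      · rw [h2] at h; simp at h
      · rw [h2] at h
        simp only [Option.map_some, Option.some_inj, Prod.mk.injEq] at h
        obtain ⟨rfl, rfl⟩ := h
        have e1 := T.lcr_sound h1
        have e2 := ih h2
        calc T.mkl (x :: u ++ A₂)
            = T.mkl [x] * T.mkl (u ++ A₂) := T.mkl_cons x (u ++ A₂)
          _ = T.mkl [x] * (T.mkl A₁ * T.mkl B₂) := by rw [e2, T.mkl_append]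
          _ = (T.mkl [x] * T.mkl A₁) * T.mkl B₂ := (mul_assoc _ _ _).symm
          _ = T.mkl (x :: A₁) * T.mkl B₂ := by rw [← T.mkl_cons]
          _ = T.mkl (v ++ r₁) * T.mkl B₂ := by rw [e1]
          _ = T.mkl (v ++ (r₁ ++ B₂)) := by rw [← T.mkl_append, List.append_assoc]

end Soundness

end TrickleGraph

namespace TrickleGraph

variable {V : Type u} [PartialOrder V] (T : TrickleGraph V)

section Wequiv

/-- Two words are reversing-equivalent if their reversing succeeds with empty outputs. -/
noncomputable def wequiv (s t : List V) : Prop := T.wcr s t = some ([], [])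

theorem wequiv_refl (s : List V) : T.wequiv s s := by
  induction s with
  | nil => rfl
  | cons x s ih =>
    unfold wequiv at *
    rw [wcr_cons, lcr_cons_self, Option.bind_some, ih]
    rfl

theorem wequiv_symm {s t : List V} (h : T.wequiv s t) : T.wequiv t s := by
  unfold wequiv at *
  rw [wcr_swap, h]
  rfl

theorem wequiv_length {s t : List V} (h : T.wequiv s t) : s.length = t.length := by
  have := T.wcr_length h
  simpa using this

theorem wequiv_sound {s t : List V} (h : T.wequiv s t) : T.mkl s = T.mkl t := by
  have := T.wcr_sound h
  simpa using this

theorem wequiv_mul {s t s' t' : List V} (h : T.wequiv s t) (h' : T.wequiv s' t') :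
    T.wequiv (s ++ s') (t ++ t') := by
  unfold wequiv at *
  rw [wcr_append_left, wcr_append_right, h]
  simp only [Option.bind_some, wcr_nil, Option.map_some, List.nil_append, h',
    List.append_nil]

theorem wequiv_cons {s t : List V} (x : V) (h : T.wequiv s t) :
    T.wequiv (x :: s) (x :: t) :=
  T.wequiv_mul (T.wequiv_refl [x]) h

theorem wequiv_cons_cancel {s t : List V} (x : V) (h : T.wequiv (x :: s) (x :: t)) :
    T.wequiv s t := by
  unfold wequiv at *
  rw [wcr_cons, lcr_cons_self, Option.bind_some] at h
  rcases h2 : T.wcr s t with _ | ⟨A, B⟩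
  · rw [h2] at h; simp at h
  · rw [h2] at h
    simp only [Option.map_some, Option.some_inj, Prod.mk.injEq] at h
    obtain ⟨h3, h4⟩ := h
    simp only [List.nil_append] at h4
    rw [h3, h4]

/-- Soundness of a single cell, in `wequiv` form. -/
theorem wequiv_cell {a c : V} (hne : a ≠ c) (hadj : T.graph.Adj a c) :
    T.wequiv [a, T.theta a c] [c, T.theta c a] := by
  unfold wequiv
  rw [wcr_cons, lcr_cons_adj T hne hadj, lcr_cons_self, Option.map_some, Option.bind_some,
    wcr_singleton, lcr_cons_self]
  rfl

theorem wequiv_nil {t : List V} (h : T.wequiv [] t) : t = [] := by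
  unfold wequiv at h
  rw [wcr_nil] at h
  simp only [Option.some_inj, Prod.mk.injEq] at h
  exact h.1

/-- Unfolding of `wequiv` on words with given heads. -/
theorem wequiv_cons_elim {y : V} {s' t : List V} (h : T.wequiv (y :: s') t) :
    ∃ Ay, T.lcr y t = some (Ay, []) ∧ T.wequiv s' Ay := by
  unfold wequiv at h
  rw [wcr_cons] at h
  rcases h1 : T.lcr y t with _ | ⟨Ay, ry⟩
  · rw [h1] at h; simp at h
  · rw [h1] at h
    simp only [Option.bind_some] at h
    rcases h2 : T.wcr s' Ay with _ | ⟨A, B⟩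
    · rw [h2] at h; simp at h
    · rw [h2] at h
      simp only [Option.map_some, Option.some_inj, Prod.mk.injEq] at h
      obtain ⟨hA, hB⟩ := h
      rcases List.append_eq_nil_iff.mp hB with ⟨hry, hBnil⟩
      refine ⟨Ay, by rw [hry], ?_⟩
      unfold wequiv
      rw [h2, hA, hBnil]

end Wequiv

end TrickleGraph

namespace TrickleGraph

variable {V : Type u} [PartialOrder V] (T : TrickleGraph V)

section Main

/-- Chains of reversing-equivalences. -/
noncomputable def chain (s t : List V) : Prop := Relation.ReflTransGen T.wequiv s t

theorem chain_single {s t : List V} (h : T.wequiv s t) : T.chain s t :=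
  Relation.ReflTransGen.single h

theorem chain_symm {s t : List V} (h : T.chain s t) : T.chain t s :=
  haveI : Std.Symm T.wequiv := ⟨fun _ _ hh => T.wequiv_symm hh⟩
  Std.Symm.symm (r := Relation.ReflTransGen T.wequiv) _ _ h

theorem chain_cons (x : V) {s t : List V} (h : T.chain s t) : T.chain (x :: s) (x :: t) :=
  Relation.ReflTransGen.lift (x :: ·) (fun _ _ hh => T.wequiv_cons x hh) _ _ h

theorem chain_length {s t : List V} (h : T.chain s t) : s.length = t.length := by
  induction h with
  | refl => rfl
  | tail _ hbc ih => exact ih.trans (T.wequiv_length hbc)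

/-- The key invariance property: letter-reversing is invariant (up to chains of
reversing-equivalence, and with identical residues) under reversing-equivalence. -/
theorem main_aux : ∀ n : ℕ, ∀ s t : List V, s.length ≤ n → T.wequiv s t →
    ∀ x A r, T.lcr x s = some (A, r) →
    ∃ A', T.lcr x t = some (A', r) ∧ T.chain A A' := by
  intro n
  induction n with
  | zero =>
    intro s t hlen heq x A r h
    have hs : s = [] := List.length_eq_zero_iff.mp (Nat.le_zero.mp hlen)
    subst hs
    have ht := T.wequiv_nil heq
    subst ht
    rw [lcr_nil] at h
    simp only [Option.some_inj, Prod.mk.injEq] at h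
    obtain ⟨rfl, rfl⟩ := h
    exact ⟨[], by rw [lcr_nil], Relation.ReflTransGen.refl⟩
  | succ n ih =>
    have ihc : ∀ s t : List V, s.length ≤ n → T.chain s t →
        ∀ x A r, T.lcr x s = some (A, r) →
        ∃ A', T.lcr x t = some (A', r) ∧ T.chain A A' := by
      intro s t hlen hch
      induction hch with
      | refl => exact fun x A r h => ⟨A, h, Relation.ReflTransGen.refl⟩
      | tail hab hbc ih2 =>
        intro x A r h
        obtain ⟨A₁, h1, hc1⟩ := ih2 x A r h
        rename_i b c
        have hblen : b.length ≤ n := by rw [← T.chain_length hab]; exact hlen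
        obtain ⟨A₂, h2, hc2⟩ := ih b c hblen hbc x A₁ r h1
        exact ⟨A₂, h2, hc1.trans hc2⟩
    intro s t hlen heq x A r h
    cases s with
    | nil =>
      have ht := T.wequiv_nil heq
      subst ht
      rw [lcr_nil] at h
      simp only [Option.some_inj, Prod.mk.injEq] at h
      obtain ⟨rfl, rfl⟩ := h
      exact ⟨[], by rw [lcr_nil], Relation.ReflTransGen.refl⟩
    | cons y s' =>
      obtain ⟨Ay, hAy, hs'Ay⟩ := T.wequiv_cons_elim heq
      cases t with
      | nil => exact absurd (T.wequiv_length heq) (by simp)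
      | cons z t' =>
        obtain ⟨Az, hAz, ht'Az⟩ := T.wequiv_cons_elim (T.wequiv_symm heq)
        have hlen' : s'.length ≤ n := by
          simp only [List.length_cons] at hlen
          omega
        by_cases hxy : x = y
        · subst hxy
          rw [lcr_cons_self] at h
          simp only [Option.some_inj, Prod.mk.injEq] at h
          obtain ⟨rfl, rfl⟩ := h
          exact ⟨Ay, hAy, T.chain_single hs'Ay⟩
        · by_cases hadj : T.graph.Adj x y
          swap
          · rw [lcr_cons_nadj T hxy hadj] at h; simp at h
          rw [lcr_cons_adj T hxy hadj] at h
          rcases h' : T.lcr (T.theta y x) s' with _ | ⟨A₁, r₁⟩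
          · rw [h'] at h; simp at h
          rw [h'] at h
          simp only [Option.map_some, Option.some_inj, Prod.mk.injEq] at h
          obtain ⟨rfl, rfl⟩ := h
          have hfull : T.lcr x (y :: s') = some (T.theta x y :: A₁, r₁) := by
            rw [lcr_cons_adj T hxy hadj, h']
            rfl
          by_cases hxz : x = z
          · subst hxz
            have heqz := hAz.symm.trans hfull
            simp only [Option.some_inj, Prod.mk.injEq] at heqz
            obtain ⟨hAzeq, hr1⟩ := heqz
            refine ⟨t', ?_, ?_⟩
            · rw [lcr_cons_self, ← hr1]
            · rw [← hAzeq]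
              exact T.chain_single (T.wequiv_symm ht'Az)
          by_cases hyz : y = z
          · subst hyz
            rw [lcr_cons_self] at hAy
            simp only [Option.some_inj, Prod.mk.injEq] at hAy
            obtain ⟨hAyt, -⟩ := hAy
            subst hAyt
            obtain ⟨A₁', h1', hc1⟩ := ih s' t' hlen' hs'Ay (T.theta y x) A₁ r₁ h'
            refine ⟨T.theta x y :: A₁', ?_, T.chain_cons _ hc1⟩
            rw [lcr_cons_adj T hxy hadj, h1']
            rfl
          · -- the generic (cube) case
            have hzy : z ≠ y := Ne.symm hyz
            -- unfold hAy : T.lcr y (z :: t') = some (Ay, [])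
            by_cases hadj_yz : T.graph.Adj y z
            swap
            · rw [lcr_cons_nadj T hyz hadj_yz] at hAy; simp at hAy
            rw [lcr_cons_adj T hyz hadj_yz] at hAy
            rcases hQ : T.lcr (T.theta z y) t' with _ | ⟨Q, rQ⟩
            · rw [hQ] at hAy; simp at hAy
            rw [hQ] at hAy
            simp only [Option.map_some, Option.some_inj, Prod.mk.injEq] at hAy
            obtain ⟨hAyeq, hrQ⟩ := hAy
            subst hrQ
            -- unfold hAz : T.lcr z (y :: s') = some (Az, [])
            rw [lcr_cons_adj T hzy hadj_yz.symm] at hAz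
            rcases hP : T.lcr (T.theta y z) s' with _ | ⟨P, rP⟩
            · rw [hP] at hAz; simp at hAz
            rw [hP] at hAz
            simp only [Option.map_some, Option.some_inj, Prod.mk.injEq] at hAz
            obtain ⟨hAzeq, hrP⟩ := hAz
            subst hrP
            -- Step 1 : transport lcr (θ y x) along s' ≈ Ay = θ y z :: Q
            obtain ⟨A₁'', h1'', hcA1⟩ := ih s' Ay hlen' hs'Ay (T.theta y x) A₁ r₁ h'
            rw [← hAyeq] at h1''
            have hInyx : T.graph.InStar y x := T.instar_of_adj hadj.symm
            have hInyz : T.graph.InStar y z := T.instar_of_adj hadj_yz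
            have hne_t : T.theta y x ≠ T.theta y z :=
              fun e => hxz (T.theta_inj hInyx hInyz e)
            by_cases hadj_t : T.graph.Adj (T.theta y x) (T.theta y z)
            swap
            · rw [lcr_cons_nadj T hne_t hadj_t] at h1''; simp at h1''
            rw [lcr_cons_adj T hne_t hadj_t] at h1''
            rcases hA3 : T.lcr (T.theta (T.theta y z) (T.theta y x)) Q with _ | ⟨A₁''', r₃⟩
            · rw [hA3] at h1''; simp at h1''
            rw [hA3] at h1''
            simp only [Option.map_some, Option.some_inj, Prod.mk.injEq] at h1''
            obtain ⟨hA1''eq, hr₃⟩ := h1''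
            subst hr₃
            -- adjacency bookkeeping
            have hadj_xz : T.graph.Adj x z :=
              T.adj_of_adj_theta_theta hadj hadj_yz.symm hadj_t
            have hadj_θz : T.graph.Adj (T.theta z x) (T.theta z y) :=
              T.adj_theta_theta hadj_xz hadj_yz hadj
            have hadj_θx : T.graph.Adj (T.theta x y) (T.theta x z) :=
              T.adj_theta_theta hadj.symm hadj_xz.symm hadj_yz
            -- P and Q are chain-related
            obtain ⟨QQ, hQQ, hcPQ⟩ := ih s' Ay hlen' hs'Ay (T.theta y z) P [] hP
            rw [← hAyeq, lcr_cons_self] at hQQ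
            simp only [Option.some_inj, Prod.mk.injEq] at hQQ
            obtain ⟨hQQeq, -⟩ := hQQ
            rw [← hQQeq] at hcPQ
            -- the cube identity
            have hq : T.theta (T.theta y z) (T.theta y x) = T.theta (T.theta z y) (T.theta z x) :=
              T.cube hadj_yz hadj.symm hadj_xz.symm
            -- Step 3 : transport lcr q along Q ⇝ P
            have hlenQ : Q.length ≤ n := by
              have e1 := (T.lcr_length hQ).1
              have e2 := T.wequiv_length heq
              simp only [List.length_cons, List.length_nil] at e1 e2 hlen ⊢
              omega
            obtain ⟨B₁', hB1', hcB⟩ := ihc Q P hlenQ (T.chain_symm hcPQ)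
              (T.theta (T.theta y z) (T.theta y x)) A₁''' r₃ hA3
            -- Step 4 : compute lcr (θ z x) (θ z y :: P)
            have hne_θz : T.theta z x ≠ T.theta z y :=
              fun e => hxy (T.theta_inj (T.instar_of_adj hadj_xz.symm)
                (T.instar_of_adj hadj_yz.symm) e)
            have hstep4 : T.lcr (T.theta z x) (T.theta z y :: P) =
                some (T.theta (T.theta z x) (T.theta z y) :: B₁', r₃) := by
              rw [lcr_cons_adj T hne_θz hadj_θz, ← hq, hB1']
              rfl
            -- Step 5 : transport along θ z y :: P ⇝ t'
            have hlenP : (T.theta z y :: P).length ≤ n := by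
              have e1 := (T.lcr_length hP).1
              simp only [List.length_cons, List.length_nil] at e1 hlen ⊢
              omega
            obtain ⟨A₂', hA2', hcA2⟩ := ihc (T.theta z y :: P) t' hlenP
              (by rw [hAzeq]; exact T.chain_single (T.wequiv_symm ht'Az))
              (T.theta z x) (T.theta (T.theta z x) (T.theta z y) :: B₁') r₃ hstep4
            -- assemble
            refine ⟨T.theta x z :: A₂', ?_, ?_⟩
            · rw [lcr_cons_adj T hxz hadj_xz, hA2']
              rfl
            · -- chain (θ x y :: A₁) ⇝ (θ x z :: A₂')
              have hp : T.theta (T.theta y x) (T.theta y z) =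
                  T.theta (T.theta x y) (T.theta x z) :=
                T.cube hadj.symm hadj_yz hadj_xz
              have hp' : T.theta (T.theta z x) (T.theta z y) =
                  T.theta (T.theta x z) (T.theta x y) :=
                T.cube hadj_xz.symm hadj_yz.symm hadj
              have hne_θx : T.theta x y ≠ T.theta x z :=
                fun e => hyz (T.theta_inj (T.instar_of_adj hadj)
                  (T.instar_of_adj hadj_xz) e)
              have c1 : T.chain (T.theta x y :: A₁) (T.theta x y :: A₁'') :=
                T.chain_cons _ hcA1
              have c2 : T.chain (T.theta x y :: A₁'')
                  (T.theta x z :: T.theta (T.theta x z) (T.theta x y) :: A₁''') := by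
                rw [← hA1''eq, hp]
                exact T.chain_single
                  (T.wequiv_mul (T.wequiv_cell hne_θx hadj_θx)
                    (T.wequiv_refl A₁'''))
              have c3 : T.chain
                  (T.theta x z :: T.theta (T.theta x z) (T.theta x y) :: A₁''')
                  (T.theta x z :: T.theta (T.theta x z) (T.theta x y) :: B₁') :=
                T.chain_cons _ (T.chain_cons _ hcB)
              have c4 : T.chain
                  (T.theta x z :: T.theta (T.theta x z) (T.theta x y) :: B₁')
                  (T.theta x z :: A₂') := by
                rw [← hp']
                exact T.chain_cons _ hcA2
              exact ((c1.trans c2).trans c3).trans c4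

end Main

end TrickleGraph

namespace TrickleGraph

variable {V : Type u} [PartialOrder V] (T : TrickleGraph V)

section Completeness

theorem main_chain {s t : List V} (hch : T.chain s t) {x : V} {A r : List V}
    (h : T.lcr x s = some (A, r)) :
    ∃ A', T.lcr x t = some (A', r) ∧ T.chain A A' := by
  induction hch with
  | refl => exact ⟨A, h, Relation.ReflTransGen.refl⟩
  | tail hab hbc ih2 =>
    obtain ⟨A₁, h1, hc1⟩ := ih2
    rename_i b c
    obtain ⟨A₂, h2, hc2⟩ := T.main_aux b.length b c le_rfl hbc x A₁ r h1
    exact ⟨A₂, h2, hc1.trans hc2⟩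

theorem chain_nil_right {u : List V} (h : T.chain [] u) : u = [] := by
  induction h with
  | refl => rfl
  | tail _ hbc ih => exact T.wequiv_nil (ih ▸ hbc)

theorem trans_aux : ∀ n : ℕ, ∀ s t u : List V, s.length ≤ n →
    T.wequiv s t → T.chain t u → T.wequiv s u := by
  intro n
  induction n with
  | zero =>
    intro s t u hlen heq hch
    have hs : s = [] := List.length_eq_zero_iff.mp (Nat.le_zero.mp hlen)
    subst hs
    have ht := T.wequiv_nil heq
    subst ht
    have hu := T.chain_nil_right hch
    subst hu
    exact T.wequiv_refl []
  | succ n ih =>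
    intro s t u hlen heq hch
    cases s with
    | nil =>
      have ht := T.wequiv_nil heq
      subst ht
      have hu := T.chain_nil_right hch
      subst hu
      exact T.wequiv_refl []
    | cons y s' =>
      obtain ⟨Ay, hAy, hs'Ay⟩ := T.wequiv_cons_elim heq
      obtain ⟨Au, hAu, hcAu⟩ := T.main_chain hch hAy
      have hlen' : s'.length ≤ n := by
        simp only [List.length_cons] at hlen
        omega
      have hs'Au : T.wequiv s' Au := by
        rcases hcAu.cases_head with rfl | ⟨b, hb1, hb2⟩
        · exact hs'Ay
        · exact ih s' Ay Au hlen' hs'Ay (Relation.ReflTransGen.head hb1 hb2)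
      show T.wcr (y :: s') u = some ([], [])
      rw [wcr_cons, hAu, Option.bind_some, hs'Au]
      rfl

theorem chain_wequiv {s t : List V} (h : T.chain s t) : T.wequiv s t := by
  rcases h.cases_head with rfl | ⟨b, hb1, hb2⟩
  · exact T.wequiv_refl s
  · exact T.trans_aux s.length s b t le_rfl hb1 hb2

theorem wequiv_trans {s t u : List V} (h1 : T.wequiv s t) (h2 : T.wequiv t u) :
    T.wequiv s u :=
  T.trans_aux s.length s t u le_rfl h1 (T.chain_single h2)

/-- The two sides of a defining relation are reversing-equivalent. -/
theorem rel_wequiv {x y : V} (hadj : T.graph.Adj x y) :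
    T.wequiv [T.phi x y, x] [T.phi y x, y] := by
  by_cases hyx : y < x
  · have ha_lt : T.phi x y < x := (T.phi_lt_self_iff (T.instar_of_adj hadj)).2 hyx
    have hadj' : T.graph.Adj (T.phi x y) x := T.adj_of_lt _ _ ha_lt
    have h1 := T.wequiv_cell (ne_of_lt ha_lt) hadj'
    rw [T.theta_of_not_lt (lt_asymm ha_lt), T.theta_of_lt ha_lt,
      Equiv.Perm.inv_apply_self] at h1
    rw [T.phi_eq_of_not_lt (T.instar_of_adj hadj.symm) (lt_asymm hyx)]
    exact h1
  · by_cases hxy : x < y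
    · have ha_lt : T.phi y x < y := (T.phi_lt_self_iff (T.instar_of_adj hadj.symm)).2 hxy
      have hadj' : T.graph.Adj y (T.phi y x) := (T.adj_of_lt _ _ ha_lt).symm
      have h1 := T.wequiv_cell (ne_of_gt ha_lt) hadj'
      rw [T.theta_of_lt ha_lt, Equiv.Perm.inv_apply_self,
        T.theta_of_not_lt (lt_asymm ha_lt)] at h1
      rw [T.phi_eq_of_not_lt (T.instar_of_adj hadj) hyx]
      exact h1
    · rw [T.phi_eq_of_not_lt (T.instar_of_adj hadj) hyx,
        T.phi_eq_of_not_lt (T.instar_of_adj hadj.symm) hxy]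
      have h1 := T.wequiv_cell (Ne.symm hadj.ne) hadj.symm
      rw [T.theta_of_not_lt hxy, T.theta_of_not_lt hyx] at h1
      exact h1

/-- The reversing congruence on the free monoid. -/
noncomputable def wcon : Con (FreeMonoid V) where
  r a b := T.wequiv (FreeMonoid.toList a) (FreeMonoid.toList b)
  iseqv := by
    refine ⟨fun a => T.wequiv_refl _, fun h => T.wequiv_symm h, fun h1 h2 => T.wequiv_trans h1 h2⟩
  mul' := fun h1 h2 => T.wequiv_mul h1 h2

/-- Completeness: equality in the trickle monoid implies reversing-equivalence. -/
theorem comp {s t : List V} (h : T.mkl s = T.mkl t) : T.wequiv s t := by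
  have h2 : conGen T.monRels (FreeMonoid.ofList s) (FreeMonoid.ofList t) := Quotient.exact h
  have hle : conGen T.monRels ≤ T.wcon := by
    apply Con.conGen_le.2
    rintro a b ⟨x, y, hadj, rfl, rfl⟩
    exact T.rel_wequiv hadj
  exact hle h2

end Completeness

end TrickleGraph

namespace TrickleGraph

variable {V : Type u} [PartialOrder V] (T : TrickleGraph V)

section MonoidFacts

theorem mkl_surjective : ∀ a : TrickleMonoid T, ∃ w : List V, a = T.mkl w := by
  intro a
  obtain ⟨w, hw⟩ := PresentedMonoid.surjective_mk (rels := T.monRels) a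
  exact ⟨FreeMonoid.toList w, hw.symm⟩

theorem wequiv_append_cancel {w u v : List V} (h : T.wequiv (w ++ u) (w ++ v)) :
    T.wequiv u v := by
  induction w with
  | nil => exact h
  | cons x w ih => exact ih (T.wequiv_cons_cancel x h)

theorem mul_left_cancel' {a b c : TrickleMonoid T} (h : a * b = a * c) : b = c := by
  obtain ⟨w, rfl⟩ := T.mkl_surjective a
  obtain ⟨u, rfl⟩ := T.mkl_surjective b
  obtain ⟨v, rfl⟩ := T.mkl_surjective c
  rw [← T.mkl_append, ← T.mkl_append] at h
  exact T.wequiv_sound (T.wequiv_append_cancel (T.comp h))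

theorem split_lemma {u p v q : List V} (h : T.wequiv (u ++ p) (v ++ q)) :
    ∃ A B C, T.wcr u v = some (A, B) ∧ T.mkl p = T.mkl (A ++ C) := by
  unfold wequiv at h
  rw [wcr_append_left] at h
  rcases h1 : T.wcr u (v ++ q) with _ | ⟨A₁, B₁⟩
  · rw [h1] at h; simp at h
  rw [h1] at h
  simp only [Option.bind_some] at h
  rcases h2 : T.wcr p A₁ with _ | ⟨C₀, C₂⟩
  · rw [h2] at h; simp at h
  rw [h2] at h
  simp only [Option.map_some, Option.some_inj, Prod.mk.injEq] at h
  obtain ⟨hC₀, hBC⟩ := h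
  rcases List.append_eq_nil_iff.mp hBC with ⟨hB₁, hC₂⟩
  rw [wcr_append_right] at h1
  rcases h3 : T.wcr u v with _ | ⟨A, B⟩
  · rw [h3] at h1; simp at h1
  rw [h3] at h1
  simp only [Option.bind_some] at h1
  rcases h4 : T.wcr B q with _ | ⟨C, D⟩
  · rw [h4] at h1; simp at h1
  rw [h4] at h1
  simp only [Option.map_some, Option.some_inj, Prod.mk.injEq] at h1
  obtain ⟨hA₁, hB₁'⟩ := h1
  refine ⟨A, B, C, rfl, ?_⟩
  have hpA₁ : T.wequiv p A₁ := by
    unfold wequiv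
    rw [h2, hC₀, hC₂]
  have := T.wequiv_sound hpA₁
  rw [this, ← hA₁]

theorem lcmL_exists (a b : TrickleMonoid T) (h : ∃ c, DvdL a c ∧ DvdL b c) :
    ∃ m, IsLcmL a b m := by
  obtain ⟨u, rfl⟩ := T.mkl_surjective a
  obtain ⟨v, rfl⟩ := T.mkl_surjective b
  obtain ⟨c, ⟨d1, hd1⟩, d2, hd2⟩ := h
  obtain ⟨p, rfl⟩ := T.mkl_surjective d1
  obtain ⟨q, rfl⟩ := T.mkl_surjective d2
  have hc : T.mkl (u ++ p) = T.mkl (v ++ q) := by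
    rw [T.mkl_append, T.mkl_append, hd1, hd2]
  obtain ⟨A, B, C, hAB, -⟩ := T.split_lemma (T.comp hc)
  refine ⟨T.mkl (u ++ A), ⟨⟨T.mkl A, (T.mkl_append u A).symm⟩, ⟨T.mkl B, ?_⟩⟩, ?_⟩
  · rw [← T.mkl_append]
    exact (T.wcr_sound hAB).symm
  · rintro c' ⟨d1', hd1'⟩ ⟨d2', hd2'⟩
    obtain ⟨p', rfl⟩ := T.mkl_surjective d1'
    obtain ⟨q', rfl⟩ := T.mkl_surjective d2'
    have hc' : T.mkl (u ++ p') = T.mkl (v ++ q') := by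
      rw [T.mkl_append, T.mkl_append, hd1', hd2']
    obtain ⟨A', B', C', hAB', hp'⟩ := T.split_lemma (T.comp hc')
    rw [hAB] at hAB'
    simp only [Option.some_inj, Prod.mk.injEq] at hAB'
    obtain ⟨hA', -⟩ := hAB'
    refine ⟨T.mkl C', ?_⟩
    rw [← hd1', ← T.mkl_append, hp', hA', ← T.mkl_append, List.append_assoc]

/-- The length function descends to the trickle monoid. -/
noncomputable def nu : TrickleMonoid T →* Multiplicative ℕ :=
  PresentedMonoid.lift (fun _ => Multiplicative.ofAdd 1) (by
    rintro a b ⟨x, y, hadj, rfl, rfl⟩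
    simp [map_mul])

theorem nu_mkl (w : List V) : T.nu (T.mkl w) = Multiplicative.ofAdd (w.length : ℕ) := by
  induction w with
  | nil =>
    rw [mkl_nil, map_one]
    rfl
  | cons x w ih =>
    rw [T.mkl_cons, map_mul, ih]
    have : T.nu (T.mkl [x]) = Multiplicative.ofAdd (1 : ℕ) := rfl
    rw [this]
    simp only [List.length_cons]
    rw [← ofAdd_add]
    congr 1
    omega

end MonoidFacts

end TrickleGraph

namespace TrickleGraph

variable {V : Type u} [PartialOrder V] (T : TrickleGraph V)

section Op

/-- The opposite trickle graph, obtained by inverting all the `phi`. Its trickle monoid is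
the opposite monoid of that of `T`. -/
noncomputable def op : TrickleGraph V where
  graph := T.graph
  mu := T.mu
  phi := fun x => (T.phi x)⁻¹
  two_le_mu := T.two_le_mu
  adj_of_lt := T.adj_of_lt
  phi_apply_of_not_inStar := fun x y h => by
    apply (T.phi x).injective
    rw [Equiv.Perm.apply_inv_self, T.phi_apply_of_not_inStar x y h]
  inStar_phi := fun x y h => (T.instar_phi_inv_iff x y).2 h
  adj_phi_iff := fun x y z hy hz => T.adj_phi_inv_iff hy hz
  adj_incomp := T.adj_incomp
  le_phi_iff := fun x y z hy hz => T.le_phi_inv_iff hy hz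
  lt_of_phi_ne := fun x y hy h => by
    apply T.lt_of_phi_ne x y hy
    intro he
    apply h
    apply (T.phi x).injective
    rw [Equiv.Perm.apply_inv_self, he]
  phi_pow_mu := fun x => by rw [inv_pow, T.phi_pow_mu, inv_one]
  mu_phi := fun x y hy => by
    conv_rhs => rw [← Equiv.Perm.apply_inv_self (T.phi x) y]
    exact (T.mu_phi x _ ((T.instar_phi_inv_iff x y).2 hy)).symm
  phi_phi := fun x y z hz hy => by
    have hxy : T.graph.InStar x y := T.instar_of_adj (T.adj_of_lt y x hy).symm
    have hxz : T.graph.InStar x z := T.instar_of_adj (T.adj_of_lt z x (hz.trans hy)).symm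
    have hy' : (T.phi x)⁻¹ y < x := (T.phi_inv_lt_self_iff hxy).2 hy
    have hz' : (T.phi x)⁻¹ z < (T.phi x)⁻¹ y := (T.lt_phi_inv_iff hxy hxz).2 hz
    have hIn1 : T.graph.InStar ((T.phi x)⁻¹ y) ((T.phi x)⁻¹ z) :=
      T.instar_of_adj (T.adj_of_lt _ _ hz').symm
    have hw : (T.phi ((T.phi x)⁻¹ y))⁻¹ ((T.phi x)⁻¹ z) < (T.phi x)⁻¹ y :=
      (T.phi_inv_lt_self_iff hIn1).2 hz'
    have hg := T.phi_phi x ((T.phi x)⁻¹ y)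
      ((T.phi ((T.phi x)⁻¹ y))⁻¹ ((T.phi x)⁻¹ z)) hw hy'
    rw [show T.phi ((T.phi x)⁻¹ y) ((T.phi ((T.phi x)⁻¹ y))⁻¹ ((T.phi x)⁻¹ z))
          = (T.phi x)⁻¹ z from Equiv.Perm.apply_inv_self _ _,
        show T.phi x ((T.phi x)⁻¹ z) = z from Equiv.Perm.apply_inv_self _ _,
        show T.phi x ((T.phi x)⁻¹ y) = y from Equiv.Perm.apply_inv_self _ _] at hg
    -- hg : z = T.phi y (T.phi x ((T.phi ((T.phi x)⁻¹ y))⁻¹ ((T.phi x)⁻¹ z)))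
    show (T.phi x)⁻¹ ((T.phi y)⁻¹ z) = (T.phi ((T.phi x)⁻¹ y))⁻¹ ((T.phi x)⁻¹ z)
    apply (T.phi x).injective
    rw [Equiv.Perm.apply_inv_self]
    apply (T.phi y).injective
    rw [Equiv.Perm.apply_inv_self]
    exact hg

end Op

end TrickleGraph

namespace TrickleGraph

variable {V : Type u} [PartialOrder V] (T : TrickleGraph V)

section OpTransfer

theorem op_op : T.op.op = T := by
  cases T
  unfold op
  simp only [inv_inv]

/-- Reversal of a free-monoid word. -/
def wrev (w : FreeMonoid V) : FreeMonoid V := FreeMonoid.ofList (FreeMonoid.toList w).reverse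

theorem wrev_mul (a b : FreeMonoid V) : wrev (a * b) = wrev b * wrev a := by
  unfold wrev
  rw [FreeMonoid.toList_mul, List.reverse_append, FreeMonoid.ofList_append]

theorem wrev_wrev (a : FreeMonoid V) : wrev (wrev a) = a := by
  unfold wrev
  simp

theorem wrev_two (a b : V) :
    wrev (FreeMonoid.of a * FreeMonoid.of b) = FreeMonoid.of b * FreeMonoid.of a := rfl

/-- Reversed defining relations of `T` are consequences of the defining relations of `T.op`. -/
theorem conGen_op_of_rel {a b : FreeMonoid V} (h : T.monRels a b) :
    conGen T.op.monRels (wrev a) (wrev b) := by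
  obtain ⟨x, y, hadj, rfl, rfl⟩ := h
  rw [wrev_two, wrev_two]
  by_cases hyx : y < x
  · have hlt : T.phi x y < x := (T.phi_lt_self_iff (T.instar_of_adj hadj)).2 hyx
    have hadjb : T.graph.Adj x (T.phi x y) := (T.adj_of_lt _ _ hlt).symm
    have h1 : T.op.monRels
        (FreeMonoid.of ((T.phi x)⁻¹ (T.phi x y)) * FreeMonoid.of x)
        (FreeMonoid.of ((T.phi (T.phi x y))⁻¹ x) * FreeMonoid.of (T.phi x y)) :=
      ⟨x, T.phi x y, hadjb, rfl, rfl⟩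
    rw [Equiv.Perm.inv_apply_self] at h1
    rw [show (T.phi (T.phi x y))⁻¹ x = x by
      apply (T.phi (T.phi x y)).injective
      rw [Equiv.Perm.apply_inv_self,
        T.phi_eq_of_not_lt (T.instar_of_adj hadjb.symm) (lt_asymm hlt)]] at h1
    rw [T.phi_eq_of_not_lt (T.instar_of_adj hadj.symm) (lt_asymm hyx)]
    exact (ConGen.Rel.of _ _ h1).symm
  · by_cases hxy : x < y
    · have hlt : T.phi y x < y := (T.phi_lt_self_iff (T.instar_of_adj hadj.symm)).2 hxy
      have hadjb : T.graph.Adj y (T.phi y x) := (T.adj_of_lt _ _ hlt).symm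
      have h1 : T.op.monRels
          (FreeMonoid.of ((T.phi y)⁻¹ (T.phi y x)) * FreeMonoid.of y)
          (FreeMonoid.of ((T.phi (T.phi y x))⁻¹ y) * FreeMonoid.of (T.phi y x)) :=
        ⟨y, T.phi y x, hadjb, rfl, rfl⟩
      rw [Equiv.Perm.inv_apply_self] at h1
      rw [show (T.phi (T.phi y x))⁻¹ y = y by
        apply (T.phi (T.phi y x)).injective
        rw [Equiv.Perm.apply_inv_self,
          T.phi_eq_of_not_lt (T.instar_of_adj hadjb.symm) (lt_asymm hlt)]] at h1
      rw [T.phi_eq_of_not_lt (T.instar_of_adj hadj) hyx]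
      exact ConGen.Rel.of _ _ h1
    · have h1 : T.op.monRels
          (FreeMonoid.of ((T.phi y)⁻¹ x) * FreeMonoid.of y)
          (FreeMonoid.of ((T.phi x)⁻¹ y) * FreeMonoid.of x) :=
        ⟨y, x, hadj.symm, rfl, rfl⟩
      rw [show (T.phi y)⁻¹ x = x by
          apply (T.phi y).injective
          rw [Equiv.Perm.apply_inv_self,
            T.phi_eq_of_not_lt (T.instar_of_adj hadj.symm) hxy],
        show (T.phi x)⁻¹ y = y by
          apply (T.phi x).injective
          rw [Equiv.Perm.apply_inv_self,
            T.phi_eq_of_not_lt (T.instar_of_adj hadj) hyx]] at h1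
      rw [T.phi_eq_of_not_lt (T.instar_of_adj hadj) hyx,
        T.phi_eq_of_not_lt (T.instar_of_adj hadj.symm) hxy]
      exact ConGen.Rel.of _ _ h1

theorem conGen_op_rev {a b : FreeMonoid V} (h : conGen T.monRels a b) :
    conGen T.op.monRels (wrev a) (wrev b) := by
  induction h with
  | of a b hab => exact T.conGen_op_of_rel hab
  | refl a => exact ConGen.Rel.refl _
  | symm _ ih => exact ih.symm
  | trans _ _ ih1 ih2 => exact ih1.trans ih2
  | mul _ _ ih1 ih2 =>
    rw [wrev_mul, wrev_mul]
    exact ConGen.Rel.mul ih2 ih1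

theorem conGen_rev_op {a b : FreeMonoid V} (h : conGen T.op.monRels a b) :
    conGen T.monRels (wrev a) (wrev b) := by
  have := T.op.conGen_op_rev h
  rwa [T.op_op] at this

/-- The canonical anti-isomorphism `Tr⁺(T) → Tr⁺(T.op)` at the level of quotients. -/
noncomputable def toOp : TrickleMonoid T → TrickleMonoid T.op :=
  Quotient.lift (fun w => PresentedMonoid.mk T.op.monRels (wrev w))
    (fun a b hab => Quot.sound (T.conGen_op_rev hab))

noncomputable def fromOp : TrickleMonoid T.op → TrickleMonoid T :=
  Quotient.lift (fun w => PresentedMonoid.mk T.monRels (wrev w))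
    (fun a b hab => Quot.sound (T.conGen_rev_op hab))

theorem toOp_mk (w : FreeMonoid V) :
    T.toOp (PresentedMonoid.mk T.monRels w) = PresentedMonoid.mk T.op.monRels (wrev w) := rfl

theorem fromOp_mk (w : FreeMonoid V) :
    T.fromOp (PresentedMonoid.mk T.op.monRels w) = PresentedMonoid.mk T.monRels (wrev w) := rfl

theorem fromOp_toOp (a : TrickleMonoid T) : T.fromOp (T.toOp a) = a := by
  obtain ⟨w, rfl⟩ := PresentedMonoid.surjective_mk (rels := T.monRels) a
  rw [toOp_mk, fromOp_mk, wrev_wrev]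

theorem toOp_fromOp (a : TrickleMonoid T.op) : T.toOp (T.fromOp a) = a := by
  obtain ⟨w, rfl⟩ := PresentedMonoid.surjective_mk (rels := T.op.monRels) a
  rw [fromOp_mk, toOp_mk, wrev_wrev]

theorem toOp_mul (a b : TrickleMonoid T) : T.toOp (a * b) = T.toOp b * T.toOp a := by
  obtain ⟨w, rfl⟩ := PresentedMonoid.surjective_mk (rels := T.monRels) a
  obtain ⟨w', rfl⟩ := PresentedMonoid.surjective_mk (rels := T.monRels) b
  rw [← map_mul, toOp_mk, toOp_mk, toOp_mk, wrev_mul, map_mul]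

theorem fromOp_mul (a b : TrickleMonoid T.op) : T.fromOp (a * b) = T.fromOp b * T.fromOp a := by
  obtain ⟨w, rfl⟩ := PresentedMonoid.surjective_mk (rels := T.op.monRels) a
  obtain ⟨w', rfl⟩ := PresentedMonoid.surjective_mk (rels := T.op.monRels) b
  rw [← map_mul, fromOp_mk, fromOp_mk, fromOp_mk, wrev_mul, map_mul]

theorem mul_right_cancel' {a b c : TrickleMonoid T} (h : a * c = b * c) : a = b := by
  have h2 : T.toOp c * T.toOp a = T.toOp c * T.toOp b := by
    rw [← toOp_mul, ← toOp_mul, h]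
  have h3 := T.op.mul_left_cancel' h2
  have := congrArg T.fromOp h3
  rwa [fromOp_toOp, fromOp_toOp] at this

theorem dvdR_iff (a b : TrickleMonoid T) : DvdR a b ↔ DvdL (T.toOp a) (T.toOp b) := by
  constructor
  · rintro ⟨c, rfl⟩
    exact ⟨T.toOp c, (T.toOp_mul c a).symm⟩
  · rintro ⟨C, hC⟩
    refine ⟨T.fromOp C, ?_⟩
    have := congrArg T.fromOp hC
    rwa [fromOp_mul, fromOp_toOp, fromOp_toOp] at this

theorem lcmR_exists (a b : TrickleMonoid T) (h : ∃ c, DvdR a c ∧ DvdR b c) :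
    ∃ m, IsLcmR a b m := by
  obtain ⟨c, hc1, hc2⟩ := h
  obtain ⟨m', hm'⟩ := T.op.lcmL_exists (T.toOp a) (T.toOp b)
    ⟨T.toOp c, (T.dvdR_iff a c).1 hc1, (T.dvdR_iff b c).1 hc2⟩
  refine ⟨T.fromOp m', ⟨?_, ?_⟩, ?_⟩
  · rw [dvdR_iff, toOp_fromOp]
    exact hm'.1.1
  · rw [dvdR_iff, toOp_fromOp]
    exact hm'.1.2
  · intro c' h1 h2
    rw [dvdR_iff, toOp_fromOp]
    exact hm'.2 (T.toOp c') ((T.dvdR_iff a c').1 h1) ((T.dvdR_iff b c').1 h2)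

end OpTransfer

end TrickleGraph

section EnvGroupFacts

theorem PresentedGroup.mk_rel_one {α : Type*} {rels : Set (FreeGroup α)} {r : FreeGroup α}
    (h : r ∈ rels) : PresentedGroup.mk rels r = 1 :=
  (QuotientGroup.eq_one_iff r).2 (Subgroup.subset_normalClosure h)

theorem envOf_mul {M : Type u} [Monoid M] (a b : M) :
    envOf M (a * b) = envOf M a * envOf M b := by
  have h1 : PresentedGroup.mk (envRels M)
      (FreeGroup.of (a * b) * (FreeGroup.of a * FreeGroup.of b)⁻¹) = 1 :=
    PresentedGroup.mk_rel_one ⟨a, b, rfl⟩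
  rw [map_mul, map_inv, map_mul] at h1
  exact mul_inv_eq_one.mp h1

/-- `envOf` as a monoid homomorphism. -/
def envOfHom (M : Type u) [Monoid M] : M →* EnvGroup M :=
  MonoidHom.mk' (envOf M) (envOf_mul)

end EnvGroupFacts

namespace TrickleGraph

variable {V : Type u} [PartialOrder V] (T : TrickleGraph V)

section GroupIso

theorem group_rel {x y : V} (hadj : T.graph.Adj x y) :
    (PresentedGroup.of (T.phi x y) : TrickleGroup T) * PresentedGroup.of x =
      PresentedGroup.of (T.phi y x) * PresentedGroup.of y := by
  have h1 : PresentedGroup.mk T.rels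
      (FreeGroup.of (T.phi x y) * FreeGroup.of x *
        (FreeGroup.of (T.phi y x) * FreeGroup.of y)⁻¹) = 1 :=
    PresentedGroup.mk_rel_one (Set.mem_union_right _ ⟨x, y, hadj, rfl⟩)
  rw [map_mul, map_inv, map_mul, map_mul] at h1
  exact mul_inv_eq_one.mp h1

/-- The monoid homomorphism from the trickle monoid to the trickle group. -/
noncomputable def monToGroup : TrickleMonoid T →* TrickleGroup T :=
  PresentedMonoid.lift (fun x => (PresentedGroup.of x : TrickleGroup T)) (by
    rintro a b ⟨x, y, hadj, rfl, rfl⟩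
    rw [map_mul, map_mul]
    simp only [FreeMonoid.lift_eval_of]
    exact T.group_rel hadj)

theorem monToGroup_of (x : V) :
    T.monToGroup (PresentedMonoid.of T.monRels x) = PresentedGroup.of x := rfl

/-- The homomorphism from the trickle group to the enveloping group of the trickle monoid;
this needs all the labels `mu` to be infinite. -/
noncomputable def grpToEnv (hmu : ∀ x : V, T.mu x = ⊤) :
    TrickleGroup T →* EnvGroup (TrickleMonoid T) :=
  PresentedGroup.toGroup
    (f := fun x => envOf (TrickleMonoid T) (PresentedMonoid.of T.monRels x)) (by
    rintro r (⟨x, n, hmun, rfl⟩ | ⟨x, y, hadj, rfl⟩)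
    · rw [hmu x] at hmun
      exact absurd hmun (by simp)
    · rw [map_mul, map_inv, map_mul, map_mul]
      simp only [FreeGroup.lift_apply_of]
      rw [mul_inv_eq_one, ← envOf_mul, ← envOf_mul]
      congr 1
      exact T.mk_eq_of_rel ⟨x, y, hadj, rfl, rfl⟩)

/-- The homomorphism from the enveloping group of the trickle monoid to the trickle group. -/
noncomputable def envToGrp : EnvGroup (TrickleMonoid T) →* TrickleGroup T :=
  PresentedGroup.toGroup (f := fun a => T.monToGroup a) (by
    rintro r ⟨a, b, rfl⟩
    rw [map_mul, map_inv, map_mul]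
    simp only [FreeGroup.lift_apply_of]
    rw [mul_inv_eq_one, map_mul])

theorem trickleGroupIso (hmu : ∀ x : V, T.mu x = ⊤) :
    Nonempty (TrickleGroup T ≃* EnvGroup (TrickleMonoid T)) := by
  refine ⟨MonoidHom.toMulEquiv (T.grpToEnv hmu) T.envToGrp ?_ ?_⟩
  · apply PresentedGroup.ext
    intro x
    simp only [MonoidHom.comp_apply, MonoidHom.id_apply]
    rw [grpToEnv, PresentedGroup.toGroup.of, envToGrp]
    rw [show envOf (TrickleMonoid T) (PresentedMonoid.of T.monRels x) =
      (PresentedGroup.of (PresentedMonoid.of T.monRels x) :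
        EnvGroup (TrickleMonoid T)) from rfl]
    rw [PresentedGroup.toGroup.of]
    exact T.monToGroup_of x
  · have key : (T.grpToEnv hmu).comp (T.monToGroup) = envOfHom (TrickleMonoid T) := by
      apply PresentedMonoid.ext
      intro x
      simp only [MonoidHom.comp_apply]
      rw [monToGroup_of, grpToEnv, PresentedGroup.toGroup.of]
      rfl
    apply PresentedGroup.ext
    intro a
    simp only [MonoidHom.comp_apply, MonoidHom.id_apply]
    rw [show (PresentedGroup.of a : EnvGroup (TrickleMonoid T)) =
      envOf (TrickleMonoid T) a from rfl]
    rw [envToGrp, show envOf (TrickleMonoid T) a =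
      (PresentedGroup.of a : EnvGroup (TrickleMonoid T)) from rfl, PresentedGroup.toGroup.of]
    have := DFunLike.congr_fun key a
    simpa [envOfHom, envOf] using this

end GroupIso

end TrickleGraph
/-- **Theorem 2.14.** For a preGarside trickle graph `Γ` (i.e. `mu x = ∞` for every vertex),
the preGarside trickle monoid `Tr⁺(Γ)` is a preGarside monoid; consequently the trickle group
`Tr(Γ)` is a preGarside group, being (isomorphic to) the enveloping group of the preGarside
monoid `Tr⁺(Γ)`. -/
theorem TrickleMonoid.isPreGarside {V : Type u} [PartialOrder V] (T : TrickleGraph V)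
    (hmu : ∀ x : V, T.mu x = ⊤) :
    IsPreGarsideMonoid (TrickleMonoid T) ∧
      Nonempty (TrickleGroup T ≃* EnvGroup (TrickleMonoid T)) := by
  constructor
  · refine ⟨?_, ?_, ?_, ?_⟩
    · intro a b c d h
      exact T.mul_left_cancel' (T.mul_right_cancel' h)
    · refine ⟨fun a => Multiplicative.toAdd (T.nu a), fun a => ?_, fun a b => ?_⟩
      · constructor
        · intro h
          obtain ⟨w, rfl⟩ := T.mkl_surjective a
          have hw : w.length = 0 := by simpa [T.nu_mkl] using h
          rw [List.length_eq_zero_iff.mp hw]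
          exact T.mkl_nil
        · rintro rfl
          simp [map_one]
      · show Multiplicative.toAdd (T.nu a) + Multiplicative.toAdd (T.nu b) ≤
          Multiplicative.toAdd (T.nu (a * b))
        apply le_of_eq
        rw [map_mul, toAdd_mul]
    · exact fun a b h => T.lcmL_exists a b h
    · exact fun a b h => T.lcmR_exists a b h
  · exact T.trickleGroupIso hmu
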